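/- For every $x \in \mathbb{R}^3$ with $x \ne 0$, the convolution of the Yukawa potential with the Coulomb potential satisfies $\int_{\mathbb{R}^3} \frac{e^{-|y|}}{|y|\,|x-y|}\, dy = \frac{4\pi}{|x|}\left(1 - e^{-|x|}\right)$. -/

import Mathlib

open MeasureTheory Real
open Set


theorem integrable_comp_polarCoord_symm_iff (f : ℝ × ℝ → ℝ) :
    IntegrableOn (fun p => p.1 • f (polarCoord.symm p)) polarCoord.target ↔ Integrable f := by
  set B : ℝ × ℝ → ℝ × ℝ →L[ℝ] ℝ × ℝ := fun p =>
    LinearMap.toContinuousLinearMap (Matrix.toLin (Module.Basis.finTwoProd ℝ) (Module.Basis.finTwoProd ℝ)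
      !![cos p.2, -p.1 * sin p.2; sin p.2, p.1 * cos p.2])
  have B_det : ∀ p, (B p).det = p.1 := by
    intro p
    conv_rhs => rw [← one_mul p.1, ← cos_sq_add_sin_sq p.2]
    simp only [B, neg_mul, LinearMap.det_toContinuousLinearMap, LinearMap.det_toLin,
      Matrix.det_fin_two_of, sub_neg_eq_add]
    ring
  have h1 : Integrable f ↔ IntegrableOn f polarCoord.source := by
    rw [IntegrableOn, Measure.restrict_congr_set polarCoord_source_ae_eq_univ,
      Measure.restrict_univ]
  have h2 := integrableOn_image_iff_integrableOn_abs_det_fderiv_smul volume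
    polarCoord.open_target.measurableSet
    (fun p _ => (hasFDerivAt_polarCoord_symm p).hasFDerivWithinAt (s := polarCoord.target))
    polarCoord.symm.injOn f
  rw [polarCoord.symm_image_target_eq_source] at h2
  rw [h1, h2]
  apply integrableOn_congr_fun _ polarCoord.open_target.measurableSet
  intro p hp
  have hB := B_det p
  simp only [B] at hB
  dsimp only
  rw [det_fderivPolarCoordSymm, abs_of_pos hp.1]

lemma radial_int {R : ℝ} (hR : 0 < R) :
    ∫ r in Ioi (0:ℝ), Real.exp (-r) * min r R = 1 - Real.exp (-R) := by
  have hsplit : Ioc (0:ℝ) R ∪ Ioi R = Ioi 0 := Ioc_union_Ioi_eq_Ioi hR.le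
  have hdisj : Disjoint (Ioc (0:ℝ) R) (Ioi R) := by
    simp [Set.disjoint_left]
  have hi1 : IntegrableOn (fun r => Real.exp (-r) * min r R) (Ioc 0 R) := by
    apply Continuous.integrableOn_Ioc
    exact (Real.continuous_exp.comp continuous_neg).mul (continuous_id.min continuous_const)
  have hi2 : IntegrableOn (fun r => Real.exp (-r) * min r R) (Ioi R) := by
    apply IntegrableOn.congr_fun (f := fun r => Real.exp (-r) * R)
    · exact ((exp_neg_integrableOn_Ioi R one_pos).congr_fun (by intro x _; simp)
        measurableSet_Ioi).mul_const R
    · intro r hr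
      simp [min_eq_right (le_of_lt (mem_Ioi.mp hr))]
    · exact measurableSet_Ioi
  rw [← hsplit, setIntegral_union hdisj measurableSet_Ioi hi1 hi2]
  have h1 : ∫ r in Ioc (0:ℝ) R, Real.exp (-r) * min r R = 1 - (1+R)*Real.exp (-R) := by
    rw [setIntegral_congr_fun measurableSet_Ioc
      (g := fun r => Real.exp (-r) * r) (by intro r hr; simp [min_eq_left hr.2])]
    rw [← intervalIntegral.integral_of_le hR.le]
    have key : ∀ r ∈ uIcc (0:ℝ) R, HasDerivAt (fun t => -(1+t)*Real.exp (-t))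
        (Real.exp (-r) * r) r := by
      intro r _
      have h1 : HasDerivAt (fun t : ℝ => -(1+t)) (-1) r := by
        exact ((hasDerivAt_id r).const_add 1).neg
      have h2 : HasDerivAt (fun t : ℝ => Real.exp (-t)) (-Real.exp (-r)) r := by
        simpa using ((hasDerivAt_id r).neg).exp
      exact (h1.mul h2).congr_deriv (by ring)
    rw [intervalIntegral.integral_eq_sub_of_hasDerivAt key]
    · simp [Real.exp_zero]; ring
    · apply Continuous.intervalIntegrable
      exact (Real.continuous_exp.comp continuous_neg).mul continuous_id
  have h2 : ∫ r in Ioi R, Real.exp (-r) * min r R = R * Real.exp (-R) := by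
    rw [setIntegral_congr_fun measurableSet_Ioi
      (g := fun r => Real.exp (-r) * R) (by intro r hr; simp [min_eq_right (le_of_lt (mem_Ioi.mp hr))])]
    rw [integral_mul_const, integral_exp_neg_Ioi]
    ring
  rw [h1, h2]; ring

lemma theta_int {R r : ℝ} (hR : 0 < R) (hr : 0 < r) (hne : r ≠ R) :
    ∫ θ in Ioo 0 π, Real.sin θ / Real.sqrt (r^2 + R^2 - 2*R*r*Real.cos θ)
      = 2 * min r R / (R * r) := by
  have hpos : ∀ θ : ℝ, 0 < r^2 + R^2 - 2*R*r*Real.cos θ := by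
    intro θ
    have h1 : Real.cos θ ≤ 1 := Real.cos_le_one θ
    have h2 : 0 < (r - R)^2 := pow_two_pos_of_ne_zero (sub_ne_zero.mpr hne)
    nlinarith [mul_nonneg (mul_pos hR hr).le (sub_nonneg.mpr h1), h2]
  have hsq : ∀ θ : ℝ, Real.sqrt (r^2+R^2-2*R*r*Real.cos θ) ≠ 0 :=
    fun θ => (Real.sqrt_pos.mpr (hpos θ)).ne'
  have hRr : (R * r) ≠ 0 := (mul_pos hR hr).ne'
  rw [← MeasureTheory.integral_Ioc_eq_integral_Ioo,
    ← intervalIntegral.integral_of_le Real.pi_pos.le]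
  have key : ∀ θ ∈ uIcc (0:ℝ) π, HasDerivAt
      (fun t => Real.sqrt (r^2+R^2-2*R*r*Real.cos t) / (R*r))
      (Real.sin θ / Real.sqrt (r^2+R^2-2*R*r*Real.cos θ)) θ := by
    intro θ _
    have hg : HasDerivAt (fun t : ℝ => r^2+R^2-2*R*r*Real.cos t) (2*R*r*Real.sin θ) θ := by
      have := ((Real.hasDerivAt_cos θ).const_mul (2*R*r)).const_sub (r^2+R^2)
      exact this.congr_deriv (by ring)
    have hd := (hg.sqrt (hpos θ).ne').div_const (R*r)
    exact hd.congr_deriv (by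
      rw [div_div, div_eq_div_iff
        (mul_ne_zero (mul_ne_zero two_ne_zero (hsq θ)) hRr) (hsq θ)]
      ring)
  rw [intervalIntegral.integral_eq_sub_of_hasDerivAt key ?int]
  case int =>
    apply Continuous.intervalIntegrable
    apply Continuous.div Real.continuous_sin
    · exact Real.continuous_sqrt.comp (by continuity)
    · exact hsq
  rw [Real.cos_pi, Real.cos_zero]
  have e1 : r^2+R^2-2*R*r*(-1) = (r+R)^2 := by ring
  have e2 : r^2+R^2-2*R*r*1 = (r-R)^2 := by ring
  rw [e1, e2, Real.sqrt_sq (by positivity), Real.sqrt_sq_eq_abs]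
  rcases le_total r R with h | h
  · rw [abs_of_nonpos (by linarith), min_eq_left h]
    field_simp
    ring
  · rw [abs_of_nonneg (by linarith), min_eq_right h]
    field_simp
    ring

noncomputable def Kk (R z s : ℝ) : ℝ :=
  Real.exp (-Real.sqrt (z^2+s^2)) / (Real.sqrt (z^2+s^2) * Real.sqrt ((z-R)^2+s^2))

noncomputable def Ff (R : ℝ) (q : ℝ × ℝ) : ℝ := if 0 < q.2 then q.2 * Kk R q.1 q.2 else 0

noncomputable def Ww (R : ℝ) (p : ℝ × ℝ) : ℝ :=
  p.1 * Real.sin p.2 * Real.exp (-p.1) / Real.sqrt (p.1^2 + R^2 - 2*R*p.1*Real.cos p.2)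

lemma measurable_Kk (R : ℝ) : Measurable (fun q : ℝ × ℝ => Kk R q.1 q.2) := by
  unfold Kk
  apply Measurable.div
  · fun_prop
  · fun_prop

lemma measurable_Ff (R : ℝ) : Measurable (Ff R) := by
  unfold Ff
  exact Measurable.ite (measurableSet_lt measurable_const measurable_snd)
    (measurable_snd.mul (measurable_Kk R)) measurable_const

lemma measurable_Ww (R : ℝ) : Measurable (Ww R) := by
  unfold Ww
  apply Measurable.div <;> fun_prop

lemma one_sub_cos (θ : ℝ) : 1 - Real.cos θ = 2 * Real.sin (θ/2)^2 := by
  have h1 : Real.cos θ = Real.cos (2*(θ/2)) := by congr 1; ring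
  rw [h1, Real.cos_two_mul']
  have := Real.sin_sq_add_cos_sq (θ/2)
  linarith

lemma rad_pos {R r : ℝ} (hR : 0 < R) (hr : 0 < r) {θ : ℝ} (hθ : θ ∈ Ioo 0 π) :
    0 < r^2 + R^2 - 2*R*r*Real.cos θ := by
  have h2 := one_sub_cos θ
  have hs : 0 < Real.sin (θ/2) :=
    Real.sin_pos_of_pos_of_lt_pi (by linarith [hθ.1]) (by linarith [hθ.2, Real.pi_pos])
  have hcoslt : Real.cos θ < 1 := by nlinarith [mul_pos hs hs]
  nlinarith [sq_nonneg (r - R), mul_pos (mul_pos hR hr) (sub_pos.mpr hcoslt)]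

lemma Ww_bound {R r θ : ℝ} (hR : 0 < R) (hr : 0 < r) (hθ : θ ∈ Ioo 0 π) :
    |Ww R (r, θ)| ≤ (1+r) * Real.exp (-r) / Real.sqrt R := by
  have hs : 0 < Real.sin (θ/2) :=
    Real.sin_pos_of_pos_of_lt_pi (by linarith [hθ.1]) (by linarith [hθ.2, Real.pi_pos])
  have hsinθ : 0 < Real.sin θ := Real.sin_pos_of_pos_of_lt_pi hθ.1 hθ.2
  have h2 := one_sub_cos θ
  have hg : 0 < r^2 + R^2 - 2*R*r*Real.cos θ := rad_pos hR hr hθ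
  have hg4 : (2*Real.sqrt R*Real.sqrt r*Real.sin (θ/2))^2 ≤ r^2 + R^2 - 2*R*r*Real.cos θ := by
    have e1 : Real.sqrt R ^ 2 = R := Real.sq_sqrt hR.le
    have e2 : Real.sqrt r ^ 2 = r := Real.sq_sqrt hr.le
    have h5 : R*r*(1-Real.cos θ) = R*r*(2*Real.sin (θ/2)^2) := by rw [h2]
    have e3 : (2*Real.sqrt R*Real.sqrt r*Real.sin (θ/2))^2
        = 4*(Real.sqrt R^2)*(Real.sqrt r^2)*Real.sin (θ/2)^2 := by ring
    rw [e3, e1, e2]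
    nlinarith [sq_nonneg (r - R), h5]
  have hsqrtg : 2*Real.sqrt R*Real.sqrt r*Real.sin (θ/2)
      ≤ Real.sqrt (r^2 + R^2 - 2*R*r*Real.cos θ) :=
    Real.le_sqrt_of_sq_le hg4
  have hsg : 0 < Real.sqrt (r^2 + R^2 - 2*R*r*Real.cos θ) := Real.sqrt_pos.mpr hg
  have hW0 : 0 ≤ Ww R (r, θ) := by
    unfold Ww
    positivity
  rw [abs_of_nonneg hW0]
  unfold Ww
  simp only
  rw [div_le_div_iff₀ hsg (Real.sqrt_pos.mpr hR)]
  have hsinle : Real.sin θ ≤ 2 * Real.sin (θ/2) := by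
    have h1 : Real.sin θ = 2 * Real.sin (θ/2) * Real.cos (θ/2) := by
      have : θ = 2*(θ/2) := by ring
      rw [this, Real.sin_two_mul]; ring_nf
    rw [h1]
    nlinarith [Real.cos_le_one (θ/2)]
  have hrs : Real.sqrt r ^ 2 = r := Real.sq_sqrt hr.le
  have hsqrtr_le : Real.sqrt r ≤ 1 + r := by
    nlinarith [sq_nonneg (Real.sqrt r - 1), Real.sqrt_nonneg r]
  have hexp : 0 < Real.exp (-r) := Real.exp_pos _
  calc r * Real.sin θ * Real.exp (-r) * Real.sqrt R
      ≤ r * (2 * Real.sin (θ/2)) * Real.exp (-r) * Real.sqrt R := by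
        gcongr
    _ ≤ ((1+r) * Real.exp (-r)) * (2*Real.sqrt R*Real.sqrt r*Real.sin (θ/2)) := by
        have key : r ≤ (1+r) * Real.sqrt r := by nlinarith [Real.sqrt_nonneg r]
        have h := mul_le_mul_of_nonneg_left key
          (show (0:ℝ) ≤ 2*Real.exp (-r)*Real.sqrt R*Real.sin (θ/2) by positivity)
        nlinarith [h]
    _ ≤ ((1+r) * Real.exp (-r)) * Real.sqrt (r^2 + R^2 - 2*R*r*Real.cos θ) := by
        apply mul_le_mul_of_nonneg_left hsqrtg
        positivity

lemma rect_subset_target : (Ioi (0:ℝ) ×ˢ Ioo 0 π) ⊆ polarCoord.target := by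
  rw [polarCoord_target]
  exact Set.prod_mono subset_rfl (Ioo_subset_Ioo (by linarith [Real.pi_pos]) le_rfl)

lemma integrable_one_add_mul_exp : IntegrableOn (fun r : ℝ => (1+r) * Real.exp (-r)) (Ioi 0) := by
  have h1 : IntegrableOn (fun r : ℝ => Real.exp (-r)) (Ioi 0) := by
    simpa using exp_neg_integrableOn_Ioi 0 one_pos
  have h2 : IntegrableOn (fun r : ℝ => Real.exp (-r) * r ^ ((2:ℝ)-1)) (Ioi 0) :=
    Real.GammaIntegral_convergent (by norm_num)
  have h2' : IntegrableOn (fun r : ℝ => Real.exp (-r) * r) (Ioi 0) := by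
    apply h2.congr_fun _ measurableSet_Ioi
    intro r hr
    norm_num [Real.rpow_one]
  have hsum : IntegrableOn (fun r : ℝ => Real.exp (-r) + Real.exp (-r) * r) (Ioi 0) :=
    h1.add h2'
  apply hsum.congr_fun _ measurableSet_Ioi
  intro r _
  simp only [Pi.add_apply]
  ring

lemma Ww_integrableOn {R : ℝ} (hR : 0 < R) : IntegrableOn (Ww R) (Ioi 0 ×ˢ Ioo 0 π) := by
  rw [IntegrableOn, Measure.volume_eq_prod, ← Measure.prod_restrict]
  have hgi : Integrable (fun p : ℝ×ℝ => ((1+p.1)*Real.exp (-p.1)/Real.sqrt R) * 1)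
      ((volume.restrict (Ioi 0)).prod (volume.restrict (Ioo 0 π))) :=
    Integrable.mul_prod (integrable_one_add_mul_exp.div_const _)
      (integrableOn_const measure_Ioo_lt_top.ne)
  apply hgi.mono (measurable_Ww R).aestronglyMeasurable
  rw [Measure.prod_restrict, ← Measure.volume_eq_prod]
  filter_upwards [ae_restrict_mem (measurableSet_Ioi.prod measurableSet_Ioo)] with p hp
  have hp1 : (0:ℝ) < p.1 := hp.1
  rw [Real.norm_eq_abs, Real.norm_eq_abs, mul_one,
    abs_of_nonneg (div_nonneg (mul_nonneg (by linarith) (Real.exp_nonneg _))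
      (Real.sqrt_nonneg R))]
  have := Ww_bound hR hp.1 hp.2
  simpa using this

lemma Ff_eqOn {R : ℝ} (hR : 0 < R) :
    Set.EqOn (fun p : ℝ×ℝ => p.1 • Ff R (polarCoord.symm p))
      ((Ioi (0:ℝ) ×ˢ Ioo 0 π).indicator (Ww R)) polarCoord.target := by
  intro p hp
  rw [polarCoord_target] at hp
  have hr : 0 < p.1 := hp.1
  have hθπ : p.2 < π := hp.2.2
  have hθη : -π < p.2 := hp.2.1
  simp only [polarCoord_symm_apply, Ff, smul_eq_mul]
  by_cases hθ : p.2 ∈ Ioo 0 π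
  · rw [Set.indicator_of_mem (Set.mem_prod.mpr ⟨hp.1, hθ⟩)]
    have hsin : 0 < Real.sin p.2 := Real.sin_pos_of_pos_of_lt_pi hθ.1 hθ.2
    rw [if_pos (mul_pos hr hsin)]
    have hzs : (p.1*Real.cos p.2)^2 + (p.1*Real.sin p.2)^2 = p.1^2 := by
      linear_combination p.1^2 * Real.sin_sq_add_cos_sq p.2
    have hzs2 : (p.1*Real.cos p.2 - R)^2 + (p.1*Real.sin p.2)^2
        = p.1^2+R^2-2*R*p.1*Real.cos p.2 := by
      linear_combination p.1^2 * Real.sin_sq_add_cos_sq p.2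
    unfold Kk Ww
    rw [hzs, hzs2, Real.sqrt_sq hr.le]
    have hg : 0 < Real.sqrt (p.1^2+R^2-2*R*p.1*Real.cos p.2) :=
      Real.sqrt_pos.mpr (rad_pos hR hr hθ)
    field_simp
  · rw [Set.indicator_of_notMem (by
      intro hmem
      exact hθ (Set.mem_prod.mp hmem).2)]
    have hθ0 : p.2 ≤ 0 := by
      by_contra h
      push_neg at h
      exact hθ ⟨h, hθπ⟩
    have hsin : Real.sin p.2 ≤ 0 := Real.sin_nonpos_of_nonpos_of_neg_pi_le hθ0 hθη.le
    rw [if_neg (by push_neg; exact mul_nonpos_iff.mpr (Or.inl ⟨hr.le, hsin⟩))]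
    ring

lemma Ff_integrable {R : ℝ} (hR : 0 < R) : Integrable (Ff R) := by
  rw [← integrable_comp_polarCoord_symm_iff]
  have h1 : IntegrableOn ((Ioi (0:ℝ) ×ˢ Ioo 0 π).indicator (Ww R)) polarCoord.target := by
    rw [IntegrableOn, integrable_indicator_iff (measurableSet_Ioi.prod measurableSet_Ioo),
      IntegrableOn, Measure.restrict_restrict (measurableSet_Ioi.prod measurableSet_Ioo),
      Set.inter_eq_self_of_subset_left rect_subset_target]
    exact Ww_integrableOn hR
  exact h1.congr_fun (fun p hp => (Ff_eqOn hR hp).symm) polarCoord.open_target.measurableSet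

lemma Ff_polar_integral {R : ℝ} (hR : 0 < R) :
    ∫ p in polarCoord.target, p.1 • Ff R (polarCoord.symm p) = ∫ p in Ioi 0 ×ˢ Ioo 0 π, Ww R p := by
  rw [setIntegral_congr_fun polarCoord.open_target.measurableSet (Ff_eqOn hR),
    setIntegral_indicator (measurableSet_Ioi.prod measurableSet_Ioo),
    Set.inter_eq_self_of_subset_right rect_subset_target]

lemma rect_integral {R : ℝ} (hR : 0 < R) :
    ∫ p in Ioi (0:ℝ) ×ˢ Ioo 0 π, Ww R p = 2/R * (1 - Real.exp (-R)) := by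
  have hint := Ww_integrableOn hR
  rw [IntegrableOn, Measure.volume_eq_prod] at hint
  rw [Measure.volume_eq_prod, setIntegral_prod _ hint]
  have h0 : ∀ᵐ (r:ℝ), r ≠ R := by
    rw [ae_iff]
    simp only [not_not, Set.setOf_eq_eq_singleton]
    exact Real.volume_singleton
  have key : ∀ᵐ r ∂(volume.restrict (Ioi (0:ℝ))),
      (∫ θ in Ioo 0 π, Ww R (r, θ)) = Real.exp (-r) * min r R * (2/R) := by
    filter_upwards [ae_restrict_mem measurableSet_Ioi, ae_restrict_of_ae h0] with r hr hne
    have hr0 : (0:ℝ) < r := hr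
    have hWrw : ∀ θ, Ww R (r, θ)
        = (r * Real.exp (-r)) * (Real.sin θ / Real.sqrt (r^2+R^2-2*R*r*Real.cos θ)) := by
      intro θ
      unfold Ww
      ring
    simp_rw [hWrw]
    rw [MeasureTheory.integral_const_mul, theta_int hR hr0 hne]
    field_simp
  rw [integral_congr_ae key, integral_mul_const, radial_int hR]
  ring

noncomputable def Gg (R : ℝ) (p : ℝ × (ℝ × ℝ)) : ℝ :=
  Real.exp (-Real.sqrt (p.1^2+(p.2.1^2+p.2.2^2))) /
    (Real.sqrt (p.1^2+(p.2.1^2+p.2.2^2)) * Real.sqrt ((p.1-R)^2+(p.2.1^2+p.2.2^2)))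

lemma measurable_Gg (R : ℝ) : Measurable (Gg R) := by
  unfold Gg
  apply Measurable.div <;> fun_prop

lemma Gg_nonneg (R : ℝ) (p : ℝ × (ℝ × ℝ)) : 0 ≤ Gg R p := by
  unfold Gg; positivity

lemma Ff_nonneg {R : ℝ} (hR : 0 < R) (q : ℝ × ℝ) : 0 ≤ Ff R q := by
  unfold Ff
  split
  · rename_i h
    have : 0 ≤ Kk R q.1 q.2 := by unfold Kk; positivity
    exact mul_nonneg (le_of_lt h) this
  · exact le_refl 0

lemma Gg_polar (R z : ℝ) (p : ℝ × ℝ) : Gg R (z, polarCoord.symm p) = Kk R z p.1 := by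
  simp only [Gg, Kk, polarCoord_symm_apply]
  have h : (p.1*Real.cos p.2)^2 + (p.1*Real.sin p.2)^2 = p.1^2 := by
    linear_combination p.1^2 * Real.sin_sq_add_cos_sq p.2
  rw [h]

lemma Ff_indicator (R z s : ℝ) :
    Ff R (z, s) = (Ioi (0:ℝ)).indicator (fun t => t * Kk R z t) s := by
  unfold Ff
  by_cases h : 0 < s
  · rw [if_pos h, Set.indicator_of_mem (mem_Ioi.mpr h)]
  · rw [if_neg h, Set.indicator_of_notMem (by simpa using h)]

lemma slice_integral (R z : ℝ) :
    ∫ w : ℝ × ℝ, Gg R (z, w) = (∫ s : ℝ, Ff R (z, s)) * (2*π) := by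
  rw [← integral_comp_polarCoord_symm (fun w => Gg R (z, w))]
  have h1 : ∀ p ∈ polarCoord.target,
      p.1 • Gg R (z, polarCoord.symm p) = (fun s => s * Kk R z s) p.1 * (fun _ : ℝ => (1:ℝ)) p.2 := by
    intro p _
    rw [Gg_polar]
    simp [smul_eq_mul]
  rw [setIntegral_congr_fun polarCoord.open_target.measurableSet h1, polarCoord_target,
    Measure.volume_eq_prod]
  rw [MeasureTheory.setIntegral_prod_mul (μ := volume) (ν := volume)
    (fun s => s * Kk R z s) (fun _ : ℝ => (1:ℝ)) (Ioi 0) (Ioo (-π) π)]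
  have h2 : ∫ θ in Ioo (-π) π, (1:ℝ) = 2*π := by
    simp [Real.volume_Ioo]
    rw [max_eq_left (by linarith [Real.pi_pos])]
    ring
  rw [h2]
  congr 1
  rw [← MeasureTheory.integral_indicator measurableSet_Ioi]
  congr 1

lemma slice_integrable {R z : ℝ} (hR : 0 < R) (hz : z ≠ R) :
    Integrable (fun w : ℝ × ℝ => Gg R (z, w)) := by
  rw [← integrable_comp_polarCoord_symm_iff]
  have hzR : 0 < |z - R| := abs_pos.mpr (sub_ne_zero.mpr hz)
  have hexp : IntegrableOn (fun s : ℝ => Real.exp (-s)) (Ioi 0) := by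
    simpa using exp_neg_integrableOn_Ioi 0 one_pos
  have hf : Integrable (fun s : ℝ => Real.exp (-s) / |z-R|) (volume.restrict (Ioi 0)) :=
    hexp.div_const _
  have hg : Integrable (fun _ : ℝ => (1:ℝ)) (volume.restrict (Ioo (-π) π)) :=
    integrableOn_const measure_Ioo_lt_top.ne
  have hmaj := hf.mul_prod hg
  rw [Measure.prod_restrict, ← Measure.volume_eq_prod] at hmaj
  have heq : (fun p : ℝ × ℝ => p.1 • Gg R (z, polarCoord.symm p))
      = fun p : ℝ × ℝ => p.1 * Kk R z p.1 := by
    funext p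
    rw [Gg_polar, smul_eq_mul]
  rw [IntegrableOn, polarCoord_target, heq]
  apply hmaj.mono
  · apply Measurable.aestronglyMeasurable
    unfold Kk
    apply Measurable.mul measurable_fst
    apply Measurable.div <;> fun_prop
  · filter_upwards [ae_restrict_mem (measurableSet_Ioi.prod measurableSet_Ioo)] with p hp
    have hs : (0:ℝ) < p.1 := hp.1
    set s := p.1
    have hK0 : 0 ≤ Kk R z s := by unfold Kk; positivity
    have hBs : s ≤ Real.sqrt (z^2+s^2) := by
      rw [Real.le_sqrt' hs]
      nlinarith [sq_nonneg z]
    have hC : |z-R| ≤ Real.sqrt ((z-R)^2+s^2) := by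
      rw [← Real.sqrt_sq_eq_abs]
      exact Real.sqrt_le_sqrt (by nlinarith [sq_nonneg s])
    have hA : Real.exp (-Real.sqrt (z^2+s^2)) ≤ Real.exp (-s) :=
      Real.exp_le_exp.mpr (neg_le_neg hBs)
    have hposB : 0 < Real.sqrt (z^2+s^2) := lt_of_lt_of_le hs hBs
    have h1 : s * Kk R z s ≤ s * Real.exp (-s) / (s * |z-R|) := by
      unfold Kk
      rw [← mul_div_assoc]
      apply div_le_div₀ (by positivity)
        (mul_le_mul_of_nonneg_left hA hs.le) (mul_pos hs hzR)
        (mul_le_mul hBs hC (abs_nonneg _) (Real.sqrt_nonneg _))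
    rw [mul_div_mul_left _ _ hs.ne'] at h1
    rw [Real.norm_eq_abs, Real.norm_eq_abs, mul_one,
      abs_of_nonneg (mul_nonneg hs.le hK0), abs_of_nonneg (by positivity)]
    exact h1

lemma ae_ne_real (R : ℝ) : ∀ᵐ (r : ℝ), r ≠ R := by
  rw [ae_iff]
  simp only [not_not, Set.setOf_eq_eq_singleton]
  exact Real.volume_singleton

lemma Gg_integrable {R : ℝ} (hR : 0 < R) : Integrable (Gg R) := by
  rw [Measure.volume_eq_prod]
  have hmeas : AEStronglyMeasurable (Gg R) (volume.prod volume) := by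
    rw [← Measure.volume_eq_prod]
    exact (measurable_Gg R).aestronglyMeasurable
  rw [MeasureTheory.integrable_prod_iff hmeas]
  constructor
  · filter_upwards [ae_ne_real R] with z hz
    exact slice_integrable hR hz
  · have heq : (fun z : ℝ => ∫ w : ℝ×ℝ, ‖Gg R (z, w)‖)
        = fun z : ℝ => (∫ s : ℝ, ‖Ff R (z, s)‖) * (2*π) := by
      funext z
      calc ∫ w : ℝ×ℝ, ‖Gg R (z,w)‖ = ∫ w : ℝ×ℝ, Gg R (z,w) := by
            congr 1
            funext w
            exact Real.norm_of_nonneg (Gg_nonneg R _)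
        _ = (∫ s : ℝ, Ff R (z,s)) * (2*π) := slice_integral R z
        _ = (∫ s : ℝ, ‖Ff R (z,s)‖) * (2*π) := by
            congr 1
            exact integral_congr_ae (Filter.Eventually.of_forall
              fun s => (Real.norm_of_nonneg (Ff_nonneg hR _)).symm)
    rw [heq]
    have hFf := Ff_integrable hR
    rw [Measure.volume_eq_prod] at hFf
    exact hFf.integral_norm_prod_left.mul_const _

lemma Gg_integral {R : ℝ} (hR : 0 < R) :
    ∫ p : ℝ × (ℝ×ℝ), Gg R p = (∫ p in Ioi (0:ℝ) ×ˢ Ioo 0 π, Ww R p) * (2*π) := by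
  have hGi := Gg_integrable hR
  rw [Measure.volume_eq_prod] at hGi
  rw [Measure.volume_eq_prod, MeasureTheory.integral_prod _ hGi]
  calc ∫ z : ℝ, ∫ w : ℝ×ℝ, Gg R (z,w)
      = ∫ z : ℝ, (∫ s : ℝ, Ff R (z,s)) * (2*π) := by
        congr 1
        funext z
        exact slice_integral R z
    _ = (∫ z : ℝ, ∫ s : ℝ, Ff R (z,s)) * (2*π) := by rw [integral_mul_const]
    _ = (∫ q : ℝ×ℝ, Ff R q) * (2*π) := by
        have hFf := Ff_integrable hR
        rw [Measure.volume_eq_prod] at hFf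
        rw [← MeasureTheory.integral_prod _ hFf, ← Measure.volume_eq_prod]
    _ = (∫ p in Ioi (0:ℝ) ×ˢ Ioo 0 π, Ww R p) * (2*π) := by
        rw [← integral_comp_polarCoord_symm (Ff R), Ff_polar_integral hR]

theorem yukawa_conv_coulomb (x : EuclideanSpace ℝ (Fin 3)) (hx : x ≠ 0) :
    ∫ y : EuclideanSpace ℝ (Fin 3), Real.exp (-‖y‖) / (‖y‖ * ‖x - y‖)
      = 4 * Real.pi / ‖x‖ * (1 - Real.exp (-‖x‖)) := by
  set R : ℝ := ‖x‖ with hRdef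
  have hR : 0 < R := norm_pos_iff.mpr hx
  set v : EuclideanSpace ℝ (Fin 3) := EuclideanSpace.single 0 R with hvdef
  have hxv : ‖x‖ = ‖v‖ := by
    rw [hvdef, EuclideanSpace.norm_single, Real.norm_eq_abs, abs_of_pos hR]
  set T := Submodule.reflection (ℝ ∙ (x - v))ᗮ with hTdef
  have hTx : T x = v := Submodule.reflection_sub hxv
  have step1 : ∫ y : EuclideanSpace ℝ (Fin 3), Real.exp (-‖y‖) / (‖y‖ * ‖x - y‖)
      = ∫ y : EuclideanSpace ℝ (Fin 3), Real.exp (-‖y‖) / (‖y‖ * ‖v - y‖) := by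
    have h := T.measurePreserving.integral_comp T.toHomeomorph.measurableEmbedding
      (fun y => Real.exp (-‖y‖) / (‖y‖ * ‖v - y‖))
    rw [← h]
    apply integral_congr_ae
    apply Filter.Eventually.of_forall
    intro y
    simp only
    rw [T.norm_map, ← hTx, ← map_sub, T.norm_map]
  rw [step1]
  have step2 : ∫ y : EuclideanSpace ℝ (Fin 3), Real.exp (-‖y‖) / (‖y‖ * ‖v - y‖)
      = ∫ p : ℝ × (ℝ × ℝ), Gg R p := by
    set e1 := (MeasurableEquiv.toLp 2 (Fin 3 → ℝ)).symm
    set e2 := MeasurableEquiv.piFinSuccAbove (fun _ : Fin 3 => ℝ) 0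
    set e3 : (ℝ × (Fin 2 → ℝ)) ≃ᵐ ℝ × (ℝ × ℝ) :=
      (MeasurableEquiv.refl ℝ).prodCongr MeasurableEquiv.finTwoArrow with he3
    have m1 := EuclideanSpace.volume_preserving_symm_measurableEquiv_toLp (Fin 3)
    have m2 := volume_preserving_piFinSuccAbove (fun _ : Fin 3 => ℝ) 0
    have m3 : MeasurePreserving e3 volume volume := by
      have h := (MeasurePreserving.id (volume : Measure ℝ)).prod
        (volume_preserving_finTwoArrow ℝ)
      rw [Measure.volume_eq_prod (α := ℝ) (β := Fin 2 → ℝ),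
        Measure.volume_eq_prod (α := ℝ) (β := ℝ × ℝ)]
      exact h
    have hcomp : ∀ y : EuclideanSpace ℝ (Fin 3),
        Real.exp (-‖y‖) / (‖y‖ * ‖v - y‖) = Gg R (e3 (e2 (e1 y))) := by
      intro y
      have hval : e3 (e2 (e1 y)) = (y 0, (y 1, y 2)) := rfl
      rw [hval]
      have hny : ‖y‖ = Real.sqrt (y 0^2 + (y 1^2 + y 2^2)) := by
        rw [EuclideanSpace.norm_eq, Fin.sum_univ_three]
        simp only [Real.norm_eq_abs, sq_abs]
        congr 1
        ring
      have hnvy : ‖v - y‖ = Real.sqrt ((y 0 - R)^2 + (y 1^2 + y 2^2)) := by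
        rw [EuclideanSpace.norm_eq, Fin.sum_univ_three]
        simp only [PiLp.sub_apply, hvdef, EuclideanSpace.single_apply,
          Real.norm_eq_abs, sq_abs]
        norm_num [Fin.ext_iff]
        congr 1
        ring
      rw [hny, hnvy]
      simp only [Gg]
    calc ∫ y : EuclideanSpace ℝ (Fin 3), Real.exp (-‖y‖) / (‖y‖ * ‖v - y‖)
        = ∫ y, Gg R (e3 (e2 (e1 y))) := by
          exact integral_congr_ae (Filter.Eventually.of_forall hcomp)
      _ = ∫ a : Fin 3 → ℝ, Gg R (e3 (e2 a)) := by
          exact m1.integral_comp' (fun a => Gg R (e3 (e2 a)))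
      _ = ∫ b : ℝ × (Fin 2 → ℝ), Gg R (e3 b) := by
          exact m2.integral_comp' (fun b => Gg R (e3 b))
      _ = ∫ p : ℝ × (ℝ × ℝ), Gg R p := by
          exact m3.integral_comp' (fun p => Gg R p)
  rw [step2, Gg_integral hR, rect_integral hR]
  rw [hRdef]
  field_simp
  ring
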